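/- Under the assumptions of the previous lemma (vertices in M are not ancestors of O ∪ S nor of each other, and S_l \ S_t ⊆ M with S_t ⊆ S_l): if W is a minimal d-separating set for O_i and O_j relative to S_t (i.e., O_i ⊥_d O_j | W ∪ S_t but O_i and O_j are d-connected given A ∪ S_t for every proper subset A ⊊ W), and additionally O_i ⊥_d O_j | W ∪ S_l, then W is also a minimal d-separating set for O_i and O_j relative to S_l (i.e., O_i and O_j are d-connected given A ∪ S_l for every proper subset A ⊊ W). -/

import Mathlib

variable {V : Type*}

/-- `Ancestor E x y`: there is a (possibly trivial) directed path from `x` to `y`. -/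
def Ancestor (E : V → V → Prop) (x y : V) : Prop :=
  Relation.ReflTransGen E x y

/-- A directed graph is acyclic (a DAG) if it has no directed cycles. -/
def Acyclic (E : V → V → Prop) : Prop :=
  ∀ v : V, ¬ Relation.TransGen E v v

/-- `v` is a collider on the path (vertex list) `l`. -/
def ColliderOn (E : V → V → Prop) (l : List V) (v : V) : Prop :=
  ∃ x y : V, [x, v, y] <:+: l ∧ E x v ∧ E y v

/-- `v` is an interior non-collider on the path `l`. -/
def NonColliderOn (E : V → V → Prop) (l : List V) (v : V) : Prop :=
  (∃ x y : V, [x, v, y] <:+: l) ∧ ¬ ColliderOn E l v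

/-- `l` is a path between `a` and `b` that is active given the conditioning set `C`:
every collider on `l` has a descendant in `C` and no non-collider on `l` is in `C`. -/
def ActivePath (E : V → V → Prop) (C : Set V) (a b : V) (l : List V) : Prop :=
  l.head? = some a ∧ l.getLast? = some b ∧ l.Nodup ∧
  l.Chain' (fun u v => E u v ∨ E v u) ∧
  (∀ v, ColliderOn E l v → ∃ d ∈ C, Ancestor E v d) ∧
  (∀ v, NonColliderOn E l v → v ∉ C)

/-- `a` and `b` are d-connected given `C`. -/
def DConn (E : V → V → Prop) (C : Set V) (a b : V) : Prop :=
  ∃ l : List V, ActivePath E C a b l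

/-- `a` and `b` are d-separated given `C`. -/
def DSep (E : V → V → Prop) (C : Set V) (a b : V) : Prop :=
  ¬ DConn E C a b

/-- Auxiliary: following a directed edge along a path, one reaches the last vertex
of the path or a collider on the path, staying a (strict) descendant. -/
lemma aux_follow (E : V → V → Prop) :
    ∀ (t : List V) (u v : V), (u :: v :: t).Chain' (fun a b => E a b ∨ E b a) → E u v →
      ∃ c, Relation.TransGen E u c ∧
        ((u :: v :: t).getLast? = some c ∨ ColliderOn E (u :: v :: t) c) := by
  intro t
  induction t with
  | nil =>
      intro u v _ huv
      exact ⟨v, Relation.TransGen.single huv, Or.inl rfl⟩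
  | cons w t ih =>
      intro u v hch huv
      have hvw : E v w ∨ E w v := (List.isChain_cons_cons.mp (List.isChain_cons_cons.mp hch).2).1
      rcases hvw with hvw | hwv
      · obtain ⟨c, hc, hcase⟩ := ih v w (List.isChain_cons_cons.mp hch).2 hvw
        refine ⟨c, (Relation.TransGen.single huv).trans hc, ?_⟩
        rcases hcase with h | h
        · left
          simpa using h
        · right
          obtain ⟨x, y, hinf, hx, hy⟩ := h
          exact ⟨x, y, hinf.trans (List.infix_cons (List.infix_refl _)), hx, hy⟩
      · refine ⟨v, Relation.TransGen.single huv, Or.inr ?_⟩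
        exact ⟨u, w, ⟨[], t, rfl⟩, huv, hwv⟩

/-- If `v` has an outgoing edge to its successor `y` on the path `l`, then `v` is a
strict ancestor of the last vertex of `l` or of a collider on `l`. -/
lemma follow_path (E : V → V → Prop) (l : List V) (b : V)
    (hch : l.Chain' (fun u v => E u v ∨ E v u)) (hlast : l.getLast? = some b)
    (x v y : V) (hinf : [x, v, y] <:+: l) (hE : E v y) :
    ∃ c, Relation.TransGen E v c ∧ (c = b ∨ ColliderOn E l c) := by
  obtain ⟨s, t, hl⟩ := hinf
  have hsuf : (v :: y :: t) <:+ l := ⟨s ++ [x], by simpa using hl⟩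
  obtain ⟨c, hc, hcase⟩ := aux_follow E t v y (hch.suffix hsuf) hE
  refine ⟨c, hc, ?_⟩
  rcases hcase with h | h
  · left
    obtain ⟨p, hp⟩ := hsuf
    rw [← hp, List.getLast?_append, h] at hlast
    simpa using hlast
  · right
    obtain ⟨x', y', hinf', hx', hy'⟩ := h
    exact ⟨x', y', hinf'.trans hsuf.isInfix, hx', hy'⟩

lemma collider_reverse {E : V → V → Prop} {l : List V} {c : V}
    (h : ColliderOn E l.reverse c) : ColliderOn E l c := by
  obtain ⟨x, y, hinf, hx, hy⟩ := h
  refine ⟨y, x, ?_, hy, hx⟩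
  have : ([x, c, y].reverse) <:+: l.reverse.reverse := by
    rw [List.reverse_infix]; exact hinf
  simpa using this

/-- A non-collider on a path from `a` to `b` is a strict ancestor of `a`, `b`,
or some collider on the path. -/
lemma noncollider_ancestor (E : V → V → Prop) (l : List V) (a b : V)
    (hch : l.Chain' (fun u v => E u v ∨ E v u))
    (hhead : l.head? = some a) (hlast : l.getLast? = some b)
    (v : V) (hnc : NonColliderOn E l v) :
    ∃ c, Relation.TransGen E v c ∧ (c = a ∨ c = b ∨ ColliderOn E l c) := by
  obtain ⟨⟨x, y, hinf⟩, hncol⟩ := hnc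
  have hch3 : [x, v, y].Chain' (fun u v => E u v ∨ E v u) := hch.infix hinf
  have hx : E x v ∨ E v x := (List.isChain_cons_cons.mp hch3).1
  have hy : E v y ∨ E y v := (List.isChain_cons_cons.mp (List.isChain_cons_cons.mp hch3).2).1
  have hout : E v y ∨ E v x := by
    rcases hx with hx | hx
    · rcases hy with hy | hy
      · exact Or.inl hy
      · exact absurd ⟨x, y, hinf, hx, hy⟩ hncol
    · exact Or.inr hx
  rcases hout with hvy | hvx
  · obtain ⟨c, hc, hcase⟩ := follow_path E l b hch hlast x v y hinf hvy
    rcases hcase with h | h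
    · exact ⟨c, hc, Or.inr (Or.inl h)⟩
    · exact ⟨c, hc, Or.inr (Or.inr h)⟩
  · -- go via the reversed list
    have hchr : l.reverse.Chain' (fun u v => E u v ∨ E v u) := by
      refine List.isChain_reverse.mpr ?_
      exact hch.imp (fun _ _ h => h.symm)
    have hlastr : l.reverse.getLast? = some a := by
      simpa using hhead
    have hinfr : [y, v, x] <:+: l.reverse := by
      have : ([x, v, y].reverse) <:+: l.reverse := List.reverse_infix.mpr hinf
      simpa using this
    obtain ⟨c, hc, hcase⟩ := follow_path E l.reverse a hchr hlastr y v x hinfr hvx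
    refine ⟨c, hc, ?_⟩
    rcases hcase with h | h
    · exact Or.inl h
    · exact Or.inr (Or.inr (collider_reverse h))

/-- If `W` is a minimal d-separating set for `O_i, O_j` relative to `S_t`, and
`O_i ⊥_d O_j | W ∪ S_l`, then `W` is also minimal relative to `S_l`. -/
theorem stmt_2 (E : V → V → Prop) (hacyc : Acyclic E) (O L S M : Set V)
    (hM : ∀ m ∈ M, ∀ x : V, Ancestor E m x → x ∉ O ∪ S ∧ (x ∈ M → x = m))
    (Oi Oj : V) (hOi : Oi ∈ O) (hOj : Oj ∈ O)
    (W : Set V) (hW : W ⊆ O \ {Oi, Oj})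
    (St Sl : Set V) (hSt : St ⊆ S ∪ M) (hSl : Sl ⊆ S ∪ M)
    (hsub : St ⊆ Sl) (hdiff : Sl \ St ⊆ M)
    (hsep : DSep E (W ∪ St) Oi Oj)
    (hmin : ∀ A : Set V, A ⊂ W → DConn E (A ∪ St) Oi Oj)
    (hsepl : DSep E (W ∪ Sl) Oi Oj) :
    ∀ A : Set V, A ⊂ W → DConn E (A ∪ Sl) Oi Oj := by
  intro A hA
  obtain ⟨l, hhead, hlast, hnd, hch, hcol, hncol⟩ := hmin A hA
  refine ⟨l, hhead, hlast, hnd, hch, ?_, ?_⟩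
  · intro v hv
    obtain ⟨d, hd, hanc⟩ := hcol v hv
    exact ⟨d, by rcases hd with h | h
                 · exact Or.inl h
                 · exact Or.inr (hsub h), hanc⟩
  · intro v hnc hvC
    have hvnotSt : v ∉ A ∪ St := hncol v hnc
    have hvM : v ∈ M := by
      rcases hvC with h | h
      · exact absurd (Or.inl h) hvnotSt
      · exact hdiff ⟨h, fun h' => hvnotSt (Or.inr h')⟩
    obtain ⟨c, hc, hcase⟩ := noncollider_ancestor E l Oi Oj hch hhead hlast v hnc
    have hancvc : Ancestor E v c := hc.to_reflTransGen
    rcases hcase with rfl | rfl | hcol'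
    · exact (hM v hvM c hancvc).1 (Or.inl hOi)
    · exact (hM v hvM c hancvc).1 (Or.inl hOj)
    · obtain ⟨d, hd, hancd⟩ := hcol c hcol'
      have hancvd : Ancestor E v d := hancvc.trans hancd
      have := hM v hvM d hancvd
      rcases hd with hd | hd
      · exact this.1 (Or.inl (hW (hA.subset hd)).1)
      · rcases hSt hd with hd' | hd'
        · exact this.1 (Or.inr hd')
        · have hdv : d = v := this.2 hd'
          subst hdv
          exact hacyc d (hc.trans_left hancd)
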